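/- Let Y be a standard planar Brownian motion started at the origin, and for a ≥ 1 let κ_a := inf{ t > 0 : ω(Y(t)) = a } be the first hitting time of the boundary of the wedge N_a (which is almost surely finite). Then there exists an absolute constant C > 0 such that for all a ≥ 1 and all r > 0, P(κ_a ≥ r) ≤ C a^{3/2} / √r. -/

import Mathlib

open MeasureTheory ProbabilityTheory

noncomputable section

/-- A standard Brownian motion (indexed by `ℝ`, relevant on `[0, ∞)`) on a
probability space `(Ω, P)`: continuous paths started at `0`, with Gaussian
increments that are independent over disjoint time intervals. -/
structure IsStandardBM {Ω : Type*} [MeasurableSpace Ω] (P : Measure Ω)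
    (W : ℝ → Ω → ℝ) : Prop where
  start : ∀ ω, W 0 ω = 0
  cont : ∀ ω, Continuous fun t => W t ω
  meas : ∀ t, Measurable (W t)
  gauss : ∀ s t : ℝ, 0 ≤ s → s ≤ t →
    P.map (fun ω => W t ω - W s ω) = gaussianReal 0 (Real.toNNReal (t - s))
  indep : ∀ (n : ℕ) (t : ℕ → ℝ), Monotone t → 0 ≤ t 0 →
    iIndepFun
      (fun i : Fin n => fun ω => W (t (i + 1)) ω - W (t i) ω) P

variable {Ω : Type*} [MeasurableSpace Ω]

/-- Dot product on `ℝ²`. -/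
def dot2 (a b : ℝ × ℝ) : ℝ := a.1 * b.1 + a.2 * b.2

/-- `v₁ = −(√2/2)(√3, −1)`. -/
def vK1 : ℝ × ℝ := (-(Real.sqrt 2 / 2) * Real.sqrt 3, Real.sqrt 2 / 2)

/-- `v₂ = −(√2/2)(√3, 1)`. -/
def vK2 : ℝ × ℝ := (-(Real.sqrt 2 / 2) * Real.sqrt 3, -(Real.sqrt 2 / 2))

/-- The wedge function `ω(w) = max{w·v₁, w·v₂}`; `N_a = {ω ≤ a}`. -/
def wedgeFn (w : ℝ × ℝ) : ℝ := max (dot2 w vK1) (dot2 w vK2)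

namespace WedgeAux

variable {n : ℕ}

/-- Sum of coordinates with index in `[p, q)`. -/
def isum (p q : ℕ) (x : Fin n → ℝ) : ℝ :=
  ∑ m ∈ Finset.univ.filter (fun m : Fin n => p ≤ (m : ℕ) ∧ (m : ℕ) < q), x m

lemma isum_congr {p q : ℕ} {x y : Fin n → ℝ}
    (h : ∀ m : Fin n, p ≤ (m : ℕ) → (m : ℕ) < q → x m = y m) :
    isum p q x = isum p q y := by
  refine Finset.sum_congr rfl fun m hm => ?_
  simp only [Finset.mem_filter, Finset.mem_univ, true_and] at hm
  exact h m hm.1 hm.2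

lemma isum_add (x : Fin n → ℝ) {p q r : ℕ} (hpq : p ≤ q) (hqr : q ≤ r) :
    isum p q x + isum q r x = isum p r x := by
  classical
  unfold isum
  rw [← Finset.sum_union]
  · refine (Finset.sum_congr ?_ fun _ _ => rfl)
    ext m
    simp only [Finset.mem_union, Finset.mem_filter, Finset.mem_univ, true_and]
    omega
  · rw [Finset.disjoint_left]
    intro m hm hm'
    simp only [Finset.mem_filter, Finset.mem_univ, true_and] at hm hm'
    omega

lemma measurable_isum (p q : ℕ) : Measurable (isum (n := n) p q) :=
  Finset.measurable_sum _ fun m _ => measurable_pi_apply m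

/-- Walk stays (strictly) negative for the first `k` steps. -/
def stayLT (n k : ℕ) : Set (Fin n → ℝ) := {x | ∀ q, 0 < q → q ≤ k → isum 0 q x < 0}

/-- Walk stays nonpositive for the first `k` steps. -/
def stayLE (n k : ℕ) : Set (Fin n → ℝ) := {x | ∀ q, 0 < q → q ≤ k → isum 0 q x ≤ 0}

/-- Walk stays (strictly) below `c` for the first `k` steps. -/
def stayBelow (n k : ℕ) (c : ℝ) : Set (Fin n → ℝ) := {x | ∀ q, 0 < q → q ≤ k → isum 0 q x < c}

/-- Strict maximum of partial sums at `j` among indices `< j`. -/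
def eA (n j : ℕ) : Set (Fin n → ℝ) := {x | ∀ i, i < j → 0 < isum i j x}

/-- Maximum of partial sums at `j` among indices in `(j, n]`. -/
def eB (n j : ℕ) : Set (Fin n → ℝ) := {x | ∀ i, j < i → i ≤ n → isum j i x ≤ 0}

lemma measurableSet_stayLT (k : ℕ) : MeasurableSet (stayLT n k) := by
  have : stayLT n k = ⋂ q ∈ Set.Icc 1 k, {x : Fin n → ℝ | isum 0 q x < 0} := by
    ext x
    simp only [stayLT, Set.mem_setOf_eq, Set.mem_iInter, Set.mem_Icc]
    exact ⟨fun h q hq => h q hq.1 hq.2, fun h q h1 h2 => h q ⟨h1, h2⟩⟩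
  rw [this]
  exact MeasurableSet.biInter (Set.to_countable _)
    fun q _ => measurableSet_lt (measurable_isum 0 q) measurable_const

lemma measurableSet_stayLE (k : ℕ) : MeasurableSet (stayLE n k) := by
  have : stayLE n k = ⋂ q ∈ Set.Icc 1 k, {x : Fin n → ℝ | isum 0 q x ≤ 0} := by
    ext x
    simp only [stayLE, Set.mem_setOf_eq, Set.mem_iInter, Set.mem_Icc]
    exact ⟨fun h q hq => h q hq.1 hq.2, fun h q h1 h2 => h q ⟨h1, h2⟩⟩
  rw [this]
  exact MeasurableSet.biInter (Set.to_countable _)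
    fun q _ => measurableSet_le (measurable_isum 0 q) measurable_const

lemma measurableSet_stayBelow (k : ℕ) (c : ℝ) : MeasurableSet (stayBelow n k c) := by
  have : stayBelow n k c = ⋂ q ∈ Set.Icc 1 k, {x : Fin n → ℝ | isum 0 q x < c} := by
    ext x
    simp only [stayBelow, Set.mem_setOf_eq, Set.mem_iInter, Set.mem_Icc]
    exact ⟨fun h q hq => h q hq.1 hq.2, fun h q h1 h2 => h q ⟨h1, h2⟩⟩
  rw [this]
  exact MeasurableSet.biInter (Set.to_countable _)
    fun q _ => measurableSet_lt (measurable_isum 0 q) measurable_const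

lemma measurableSet_eA (j : ℕ) : MeasurableSet (eA n j) := by
  have : eA n j = ⋂ i ∈ Set.Iio j, {x : Fin n → ℝ | 0 < isum i j x} := by
    ext x
    simp only [eA, Set.mem_setOf_eq, Set.mem_iInter, Set.mem_Iio]
  rw [this]
  exact MeasurableSet.biInter (Set.to_countable _)
    fun i _ => measurableSet_lt measurable_const (measurable_isum i j)

lemma measurableSet_eB (j : ℕ) : MeasurableSet (eB n j) := by
  have : eB n j = ⋂ i ∈ Set.Ioc j n, {x : Fin n → ℝ | isum j i x ≤ 0} := by
    ext x
    simp only [eB, Set.mem_setOf_eq, Set.mem_iInter, Set.mem_Ioc]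
    exact ⟨fun h i hi => h i hi.1 hi.2, fun h i h1 h2 => h i ⟨h1, h2⟩⟩
  rw [this]
  exact MeasurableSet.biInter (Set.to_countable _)
    fun i _ => measurableSet_le (measurable_isum j i) measurable_const

/-- first-argmax existence, purely about sequences. -/
lemma exists_first_argmax (f : ℕ → ℝ) (n : ℕ) :
    ∃ j ≤ n, (∀ i, i < j → f i < f j) ∧ (∀ i, j < i → i ≤ n → f i ≤ f j) := by
  induction n with
  | zero => exact ⟨0, le_rfl, fun i hi => absurd hi (Nat.not_lt_zero i), fun i h1 h2 => by omega⟩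
  | succ n ih =>
    obtain ⟨j, hj, hA, hB⟩ := ih
    by_cases h : f (n + 1) ≤ f j
    · refine ⟨j, by omega, hA, fun i h1 h2 => ?_⟩
      rcases Nat.lt_or_ge i (n + 1) with h' | h'
      · exact hB i h1 (by omega)
      · have : i = n + 1 := by omega
        rwa [this]
    · push_neg at h
      refine ⟨n + 1, le_rfl, fun i hi => ?_, fun i h1 h2 => by omega⟩
      rcases Nat.lt_trichotomy i j with h' | h' | h'
      · exact lt_trans (hA i h') h
      · rw [h']; exact h
      · exact lt_of_le_of_lt (hB i h' (by omega)) h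

/-- The sets `eA j ∩ eB j`, `j = 0, ..., n`, cover everything. -/
lemma cover_eq_univ :
    (⋃ j ∈ Finset.range (n + 1), eA n j ∩ eB n j) = Set.univ := by
  ext x
  simp only [Set.mem_iUnion, Set.mem_univ, iff_true, Finset.mem_range]
  obtain ⟨j, hj, hA, hB⟩ := exists_first_argmax (fun q => isum 0 q x) n
  refine ⟨j, by omega, fun i hi => ?_, fun i h1 h2 => ?_⟩
  · have h := hA i hi
    have hadd := isum_add x (p := 0) (q := i) (r := j) (Nat.zero_le i) (le_of_lt hi)
    linarith
  · have h := hB i h1 h2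
    have hadd := isum_add x (p := 0) (q := j) (r := i) (Nat.zero_le j) (le_of_lt h1)
    linarith

/-- The sets `eA j ∩ eB j` are pairwise disjoint. -/
lemma cover_disjoint_aux {j j' : ℕ} (h : j < j') (hj' : j' ≤ n) :
    Disjoint (eA n j ∩ eB n j) (eA n j' ∩ eB n j') := by
  rw [Set.disjoint_left]
  rintro x ⟨-, hBj⟩ ⟨hAj', -⟩
  have h1 := hBj j' h hj'
  have h2 := hAj' j h
  linarith

lemma cover_disjoint {j j' : ℕ} (hjj' : j ≠ j') (hj : j ≤ n) (hj' : j' ≤ n) :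
    Disjoint (eA n j ∩ eB n j) (eA n j' ∩ eB n j') := by
  rcases Nat.lt_or_ge j j' with h | h
  · exact cover_disjoint_aux h hj'
  · exact (cover_disjoint_aux (by omega) hj).symm


section Measures

variable (ν : Measure ℝ) [IsProbabilityMeasure ν]

lemma measurePreserving_comp_perm (σ : Equiv.Perm (Fin n)) :
    MeasurePreserving (fun x : Fin n → ℝ => x ∘ σ)
      (Measure.pi fun _ => ν) (Measure.pi fun _ => ν) := by
  have hm : Measurable (fun x : Fin n → ℝ => x ∘ σ) :=
    measurable_pi_lambda _ fun m => measurable_pi_apply (σ m)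
  refine ⟨hm, ?_⟩
  refine (Measure.pi_eq fun s hs => ?_).symm
  rw [Measure.map_apply hm (MeasurableSet.univ_pi hs)]
  have hset : (fun x : Fin n → ℝ => x ∘ σ) ⁻¹' (Set.univ.pi s)
      = Set.univ.pi (fun m => s (σ.symm m)) := by
    ext x
    simp only [Set.mem_preimage, Set.mem_univ_pi, Function.comp]
    constructor
    · intro h m
      have := h (σ.symm m)
      simpa using this
    · intro h m
      have := h (σ m)
      simpa using this
  rw [hset, Measure.pi_pi]
  exact Equiv.prod_comp σ.symm (fun m => ν (s m))

/-- Independence of events depending on disjoint blocks of coordinates. -/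
lemma box_mul (j : ℕ) {S T : Set (Fin n → ℝ)}
    (hSm : MeasurableSet S) (hTm : MeasurableSet T)
    (hS : ∀ x y : Fin n → ℝ, (∀ m : Fin n, (m : ℕ) < j → x m = y m) → x ∈ S → y ∈ S)
    (hT : ∀ x y : Fin n → ℝ, (∀ m : Fin n, j ≤ (m : ℕ) → x m = y m) → x ∈ T → y ∈ T) :
    Measure.pi (fun _ : Fin n => ν) (S ∩ T)
      = Measure.pi (fun _ : Fin n => ν) S * Measure.pi (fun _ : Fin n => ν) T := by
  classical
  set p : Fin n → Prop := fun m => (m : ℕ) < j with hp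
  set e := MeasurableEquiv.piEquivPiSubtypeProd (fun _ : Fin n => ℝ) p with he
  have hmp := measurePreserving_piEquivPiSubtypeProd (fun _ : Fin n => ν) p
  set S₀ : Set ((i : Subtype p) → ℝ) := {z | e.symm (z, fun _ => 0) ∈ S} with hS₀
  set T₀ : Set ((i : {m // ¬ p m}) → ℝ) := {w | e.symm ((fun _ => 0), w) ∈ T} with hT₀
  have hmS₀ : MeasurableSet S₀ :=
    (e.symm.measurable.comp (measurable_id.prodMk measurable_const)) hSm
  have hmT₀ : MeasurableSet T₀ :=
    (e.symm.measurable.comp (measurable_const.prodMk measurable_id)) hTm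
  have hes : ∀ (z : (i : Subtype p) → ℝ) (w : (i : {m // ¬ p m}) → ℝ) (m : Fin n),
      e.symm (z, w) m = if h : p m then z ⟨m, h⟩ else w ⟨m, h⟩ := by
    intro z w m
    rfl
  have heS : S = e ⁻¹' (S₀ ×ˢ Set.univ) := by
    ext x
    simp only [Set.mem_preimage, Set.mem_prod, Set.mem_univ, and_true, hS₀, Set.mem_setOf_eq]
    have hagree : ∀ m : Fin n, (m : ℕ) < j → (e.symm ((e x).1, fun _ => 0)) m = x m := by
      intro m hm
      rw [hes]
      rw [dif_pos hm]
      rfl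
    constructor
    · intro hx
      exact hS x _ (fun m hm => (hagree m hm).symm) hx
    · intro hx
      exact hS _ x (fun m hm => hagree m hm) hx
  have heT : T = e ⁻¹' (Set.univ ×ˢ T₀) := by
    ext x
    simp only [Set.mem_preimage, Set.mem_prod, Set.mem_univ, true_and, hT₀, Set.mem_setOf_eq]
    have hagree : ∀ m : Fin n, j ≤ (m : ℕ) → (e.symm ((fun _ => 0), (e x).2)) m = x m := by
      intro m hm
      rw [hes]
      rw [dif_neg (by omega)]
      rfl
    constructor
    · intro hx
      exact hT x _ (fun m hm => (hagree m hm).symm) hx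
    · intro hx
      exact hT _ x (fun m hm => hagree m hm) hx
  have hInt : S ∩ T = e ⁻¹' (S₀ ×ˢ T₀) := by
    rw [heS, heT, ← Set.preimage_inter, Set.prod_inter_prod, Set.univ_inter, Set.inter_univ]
  have h1 : Measure.pi (fun _ : Fin n => ν) (S ∩ T)
      = Measure.pi (fun _ : Subtype p => ν) S₀ * Measure.pi (fun _ : {m // ¬ p m} => ν) T₀ := by
    rw [hInt, hmp.measure_preimage (hmS₀.prod hmT₀).nullMeasurableSet, Measure.prod_prod]
  have h2 : Measure.pi (fun _ : Fin n => ν) S = Measure.pi (fun _ : Subtype p => ν) S₀ := by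
    rw [heS, hmp.measure_preimage (hmS₀.prod MeasurableSet.univ).nullMeasurableSet,
      Measure.prod_prod, measure_univ, mul_one]
  have h3 : Measure.pi (fun _ : Fin n => ν) T = Measure.pi (fun _ : {m // ¬ p m} => ν) T₀ := by
    rw [heT, hmp.measure_preimage (MeasurableSet.univ.prod hmT₀).nullMeasurableSet,
      Measure.prod_prod, measure_univ, one_mul]
  rw [h1, h2, h3]

end Measures

/-- Reversal of the first `j` coordinates. -/
def revFun (n j : ℕ) (m : Fin n) : Fin n :=
  if h : (m : ℕ) < j ∧ j ≤ n then ⟨j - 1 - (m : ℕ), by omega⟩ else m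

lemma revFun_involutive (n j : ℕ) : Function.Involutive (revFun n j) := by
  intro m
  unfold revFun
  by_cases h : (m : ℕ) < j ∧ j ≤ n
  · rw [dif_pos h, dif_pos (by simp only [Fin.val_mk]; omega)]
    exact Fin.ext (by simp only [Fin.val_mk]; omega)
  · rw [dif_neg h, dif_neg h]

def revPerm (n j : ℕ) : Equiv.Perm (Fin n) := (revFun_involutive n j).toPerm

lemma revPerm_apply {j : ℕ} (m : Fin n) (hm : (m : ℕ) < j) (hjn : j ≤ n) :
    revPerm n j m = ⟨j - 1 - (m : ℕ), by omega⟩ := by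
  simp only [revPerm, Function.Involutive.coe_toPerm]
  exact dif_pos ⟨hm, hjn⟩

/-- Shift by `j` (cyclically). -/
def shiftPerm (n j : ℕ) : Equiv.Perm (Fin n) where
  toFun m := ⟨((m : ℕ) + j % n) % n, Nat.mod_lt _ (by have := m.isLt; omega)⟩
  invFun m := ⟨((m : ℕ) + (n - j % n)) % n, Nat.mod_lt _ (by have := m.isLt; omega)⟩
  left_inv m := by
    have hn : 0 < n := by have := m.isLt; omega
    have hj : j % n < n := Nat.mod_lt _ hn
    refine Fin.ext ?_
    simp only [Fin.val_mk]
    rw [Nat.mod_add_mod]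
    have : (m : ℕ) + j % n + (n - j % n) = (m : ℕ) + n := by omega
    rw [this, Nat.add_mod_right, Nat.mod_eq_of_lt m.isLt]
  right_inv m := by
    have hn : 0 < n := by have := m.isLt; omega
    have hj : j % n < n := Nat.mod_lt _ hn
    refine Fin.ext ?_
    simp only [Fin.val_mk]
    rw [Nat.mod_add_mod]
    have : (m : ℕ) + (n - j % n) + j % n = (m : ℕ) + n := by omega
    rw [this, Nat.add_mod_right, Nat.mod_eq_of_lt m.isLt]

lemma shiftPerm_apply {j : ℕ} (m : Fin n) (hm : (m : ℕ) + j < n) :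
    shiftPerm n j m = ⟨(m : ℕ) + j, hm⟩ := by
  have hjn : j % n = j := Nat.mod_eq_of_lt (by omega)
  refine Fin.ext ?_
  show ((m : ℕ) + j % n) % n = (m : ℕ) + j
  rw [hjn, Nat.mod_eq_of_lt hm]

section Measures2

variable (ν : Measure ℝ) [IsProbabilityMeasure ν]

lemma measure_eB {j : ℕ} (hjn : j ≤ n) :
    Measure.pi (fun _ : Fin n => ν) (eB n j)
      = Measure.pi (fun _ : Fin n => ν) (stayLE n (n - j)) := by
  have hmp := measurePreserving_comp_perm (n := n) ν (shiftPerm n j)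
  have hset : (fun x : Fin n → ℝ => x ∘ shiftPerm n j) ⁻¹' (stayLE n (n - j)) = eB n j := by
    ext x
    simp only [Set.mem_preimage, stayLE, eB, Set.mem_setOf_eq]
    have key : ∀ q : ℕ, 0 < q → q ≤ n - j → isum 0 q (x ∘ shiftPerm n j) = isum j (j + q) x := by
      intro q hq hqnj
      unfold isum
      refine Finset.sum_bij'
        (fun m hm => (⟨(m : ℕ) + j, by
          simp only [Finset.mem_filter, Finset.mem_univ, true_and] at hm; omega⟩ : Fin n))
        (fun m hm => (⟨(m : ℕ) - j, by
          have := m.isLt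
          simp only [Finset.mem_filter, Finset.mem_univ, true_and] at hm; omega⟩ : Fin n))
        ?_ ?_ ?_ ?_ ?_
      · intro m hm
        simp only [Finset.mem_filter, Finset.mem_univ, true_and, Fin.val_mk] at hm ⊢
        omega
      · intro m hm
        simp only [Finset.mem_filter, Finset.mem_univ, true_and, Fin.val_mk] at hm ⊢
        omega
      · intro m hm
        simp only [Finset.mem_filter, Finset.mem_univ, true_and] at hm
        exact Fin.ext (by simp only [Fin.val_mk]; omega)
      · intro m hm
        simp only [Finset.mem_filter, Finset.mem_univ, true_and] at hm
        exact Fin.ext (by simp only [Fin.val_mk]; omega)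
      · intro m hm
        simp only [Finset.mem_filter, Finset.mem_univ, true_and] at hm
        have hlt : (m : ℕ) + j < n := by omega
        show x (shiftPerm n j m) = _
        rw [shiftPerm_apply m hlt]
    constructor
    · intro h i hji hin
      have := h (i - j) (by omega) (by omega)
      rw [key (i - j) (by omega) (by omega)] at this
      have hij : j + (i - j) = i := by omega
      rwa [hij] at this
    · intro h q hq hqnj
      rw [key q hq hqnj]
      exact h (j + q) (by omega) (by omega)
  rw [← hset, hmp.measure_preimage (measurableSet_stayLE _).nullMeasurableSet]

lemma measure_eA (hsym : ν.map (fun y : ℝ => -y) = ν) {j : ℕ} (hjn : j ≤ n) :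
    Measure.pi (fun _ : Fin n => ν) (eA n j)
      = Measure.pi (fun _ : Fin n => ν) (stayLT n j) := by
  classical
  set g : Fin n → ℝ → ℝ := fun m => if (m : ℕ) < j then Neg.neg else id with hg
  have hgmp : ∀ m : Fin n, MeasurePreserving (g m) ν ν := by
    intro m
    simp only [hg]
    split_ifs
    · exact ⟨measurable_neg, hsym⟩
    · exact MeasurePreserving.id ν
  have hneg : MeasurePreserving (fun (x : Fin n → ℝ) m => g m (x m))
      (Measure.pi fun _ => ν) (Measure.pi fun _ => ν) :=
    measurePreserving_pi _ _ hgmp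
  have hperm := measurePreserving_comp_perm (n := n) ν (revPerm n j)
  have hmp : MeasurePreserving
      ((fun (x : Fin n → ℝ) m => g m (x m)) ∘ (fun x : Fin n → ℝ => x ∘ revPerm n j))
      (Measure.pi fun _ => ν) (Measure.pi fun _ => ν) := hneg.comp hperm
  set Φ := ((fun (x : Fin n → ℝ) m => g m (x m)) ∘ (fun x : Fin n → ℝ => x ∘ revPerm n j))
    with hΦ
  have hΦval : ∀ (x : Fin n → ℝ) (m : Fin n), (m : ℕ) < j →
      Φ x m = -(x ⟨j - 1 - (m : ℕ), by omega⟩) := by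
    intro x m hm
    simp only [hΦ, Function.comp_apply, hg]
    rw [if_pos hm, revPerm_apply m hm hjn]
  have hset : Φ ⁻¹' (stayLT n j) = eA n j := by
    ext x
    simp only [Set.mem_preimage, stayLT, eA, Set.mem_setOf_eq]
    have key : ∀ q : ℕ, 0 < q → q ≤ j → isum 0 q (Φ x) = -(isum (j - q) j x) := by
      intro q hq hqj
      unfold isum
      rw [← Finset.sum_neg_distrib]
      refine Finset.sum_bij'
        (fun m hm => (⟨j - 1 - (m : ℕ), by omega⟩ : Fin n))
        (fun m hm => (⟨j - 1 - (m : ℕ), by omega⟩ : Fin n))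
        ?_ ?_ ?_ ?_ ?_
      · intro m hm
        simp only [Finset.mem_filter, Finset.mem_univ, true_and, Fin.val_mk] at hm ⊢
        omega
      · intro m hm
        simp only [Finset.mem_filter, Finset.mem_univ, true_and, Fin.val_mk] at hm ⊢
        omega
      · intro m hm
        simp only [Finset.mem_filter, Finset.mem_univ, true_and] at hm
        exact Fin.ext (by simp only [Fin.val_mk]; omega)
      · intro m hm
        simp only [Finset.mem_filter, Finset.mem_univ, true_and] at hm
        exact Fin.ext (by simp only [Fin.val_mk]; omega)
      · intro m hm
        simp only [Finset.mem_filter, Finset.mem_univ, true_and] at hm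
        exact hΦval x m (by omega)
    constructor
    · intro h i hij
      have := h (j - i) (by omega) (by omega)
      rw [key (j - i) (by omega) (by omega)] at this
      have hji : j - (j - i) = i := by omega
      rw [hji] at this
      linarith
    · intro h q hq hqj
      rw [key q hq hqj]
      have := h (j - q) (by omega)
      linarith
  rw [← hset, hmp.measure_preimage (measurableSet_stayLT _).nullMeasurableSet]

end Measures2

section MainDiscrete

variable (ν : Measure ℝ) [IsProbabilityMeasure ν]

lemma isum_nil (p : ℕ) (x : Fin n → ℝ) : isum p 0 x = 0 := by
  unfold isum
  refine Finset.sum_eq_zero ?_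
  intro m hm
  simp only [Finset.mem_filter, Finset.mem_univ, true_and] at hm
  omega

/-- The main discrete fluctuation bound: the probability that a symmetric iid walk
stays strictly negative for `n` steps is at most `1/√(n+1)`. -/
theorem stayLT_bound (hsym : ν.map (fun y : ℝ => -y) = ν) :
    Measure.pi (fun _ : Fin n => ν) (stayLT n n) ≤ ENNReal.ofReal (1 / Real.sqrt (n + 1)) := by
  classical
  set μ := Measure.pi (fun _ : Fin n => ν) with hμ
  have hprob : IsProbabilityMeasure μ := by rw [hμ]; infer_instance
  set b := μ (stayLT n n) with hb
  -- partition by first argmax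
  have hsum : ∑ j ∈ Finset.range (n + 1), μ (eA n j ∩ eB n j) = 1 := by
    rw [← measure_biUnion_finset ?_ ?_]
    · rw [cover_eq_univ, measure_univ]
    · intro j hj j' hj' hne
      simp only [Finset.coe_range, Set.mem_Iio] at hj hj'
      exact cover_disjoint hne (by omega) (by omega)
    · intro j hj
      exact (measurableSet_eA j).inter (measurableSet_eB j)
  have hterm : ∀ j ∈ Finset.range (n + 1), b * b ≤ μ (eA n j ∩ eB n j) := by
    intro j hj
    simp only [Finset.mem_range] at hj
    have hjn : j ≤ n := by omega
    have hfact : μ (eA n j ∩ eB n j) = μ (stayLT n j) * μ (stayLE n (n - j)) := by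
      rw [box_mul ν j (measurableSet_eA j) (measurableSet_eB j) ?_ ?_,
        measure_eA ν hsym hjn, measure_eB ν hjn]
      · intro x y hxy hx i hij
        have : isum i j x = isum i j y := isum_congr (fun m h1 h2 => hxy m (by omega))
        rw [← this]
        exact hx i hij
      · intro x y hxy hx i h1 h2
        have : isum j i x = isum j i y := isum_congr (fun m h1' h2' => hxy m (by omega))
        rw [← this]
        exact hx i h1 h2
    rw [hfact]
    refine mul_le_mul' (measure_mono ?_) (measure_mono ?_)
    · intro x hx q h1 h2
      exact hx q h1 (by omega)
    · intro x hx q h1 h2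
      exact le_of_lt (hx q h1 (by omega))
  have hmain : ((n + 1 : ℕ) : ENNReal) * (b * b) ≤ 1 := by
    calc ((n + 1 : ℕ) : ENNReal) * (b * b)
        = ∑ _j ∈ Finset.range (n + 1), b * b := by
          rw [Finset.sum_const, Finset.card_range, nsmul_eq_mul]
      _ ≤ ∑ j ∈ Finset.range (n + 1), μ (eA n j ∩ eB n j) := Finset.sum_le_sum hterm
      _ = 1 := hsum
  -- convert to the real bound
  have hbne : b ≠ ⊤ := measure_ne_top μ _
  set β := b.toReal with hβ
  have hβ0 : 0 ≤ β := ENNReal.toReal_nonneg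
  have hreal : ((n : ℝ) + 1) * (β * β) ≤ 1 := by
    have := ENNReal.toReal_mono ENNReal.one_ne_top hmain
    rwa [ENNReal.toReal_mul, ENNReal.toReal_mul, ENNReal.toReal_natCast,
      ENNReal.toReal_one, Nat.cast_add, Nat.cast_one] at this
  have hpos : (0:ℝ) < (n:ℝ) + 1 := by positivity
  have hsq : β ^ 2 ≤ 1 / ((n:ℝ) + 1) := by
    rw [le_div_iff₀ hpos]
    nlinarith
  have hβle : β ≤ 1 / Real.sqrt ((n:ℝ) + 1) := by
    have h1 : β = Real.sqrt (β ^ 2) := (Real.sqrt_sq hβ0).symm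
    have h2 : Real.sqrt (β ^ 2) ≤ Real.sqrt (1 / ((n:ℝ)+1)) := Real.sqrt_le_sqrt hsq
    have h3 : Real.sqrt (1 / ((n:ℝ)+1)) = 1 / Real.sqrt ((n:ℝ)+1) := by
      rw [one_div, one_div, Real.sqrt_inv]
    rw [h1]
    rw [h3] at h2
    exact h2
  calc b = ENNReal.ofReal β := (ENNReal.ofReal_toReal hbne).symm
    _ ≤ ENNReal.ofReal (1 / Real.sqrt ((n:ℝ) + 1)) := ENNReal.ofReal_le_ofReal hβle

lemma isum_head (x : Fin (n + 1) → ℝ) {q : ℕ} (hq : 0 < q) (hqn : q ≤ n + 1) :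
    isum 0 q x = x 0 + isum 0 (q - 1) (fun j : Fin n => x j.succ) := by
  have h1 : isum 0 1 x + isum 1 q x = isum 0 q x := isum_add x (by omega) (by omega)
  have h2 : isum 0 1 x = x 0 := by
    unfold isum
    have : Finset.univ.filter (fun m : Fin (n+1) => 0 ≤ (m : ℕ) ∧ (m : ℕ) < 1)
        = {(0 : Fin (n+1))} := by
      ext m
      simp only [Finset.mem_filter, Finset.mem_univ, true_and, Finset.mem_singleton]
      constructor
      · intro h
        exact Fin.ext (by simp only [Fin.val_zero]; omega)
      · intro h
        subst h
        simp
    rw [this, Finset.sum_singleton]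
  have h3 : isum 1 q x = isum 0 (q - 1) (fun j : Fin n => x j.succ) := by
    unfold isum
    refine Finset.sum_bij'
      (fun m hm => (⟨(m : ℕ) - 1, by
        have := m.isLt
        simp only [Finset.mem_filter, Finset.mem_univ, true_and] at hm; omega⟩ : Fin n))
      (fun m hm => (⟨(m : ℕ) + 1, by
        have := m.isLt
        simp only [Finset.mem_filter, Finset.mem_univ, true_and] at hm; omega⟩ : Fin (n+1)))
      ?_ ?_ ?_ ?_ ?_
    · intro m hm
      simp only [Finset.mem_filter, Finset.mem_univ, true_and, Fin.val_mk] at hm ⊢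
      omega
    · intro m hm
      simp only [Finset.mem_filter, Finset.mem_univ, true_and, Fin.val_mk] at hm ⊢
      omega
    · intro m hm
      simp only [Finset.mem_filter, Finset.mem_univ, true_and] at hm
      exact Fin.ext (by simp only [Fin.val_mk]; omega)
    · intro m hm
      simp only [Finset.mem_filter, Finset.mem_univ, true_and] at hm
      exact Fin.ext (by simp only [Fin.val_mk]; omega)
    · intro m hm
      simp only [Finset.mem_filter, Finset.mem_univ, true_and] at hm
      have : (⟨(m : ℕ) - 1, by have := m.isLt; omega⟩ : Fin n).succ = m :=
        Fin.ext (by simp only [Fin.val_succ, Fin.val_mk]; omega)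
      exact congrArg x this.symm
  rw [← h1, h2, h3]

/-- Level version: probability that the walk stays below `c > 0` for `n` steps, assuming
`ν (Iic (-c)) ≥ 1/6`. -/
theorem stayBelow_bound (hsym : ν.map (fun y : ℝ => -y) = ν) {c : ℝ} (hc : 0 < c)
    (hκ : ENNReal.ofReal (1/6) ≤ ν (Set.Iic (-c))) :
    Measure.pi (fun _ : Fin n => ν) (stayBelow n n c)
      ≤ ENNReal.ofReal (6 / Real.sqrt (n + 2)) := by
  classical
  set μn := Measure.pi (fun _ : Fin n => ν) with hμn
  set e := MeasurableEquiv.piFinSuccAbove (fun _ : Fin (n+1) => ℝ) 0 with he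
  have hmp := measurePreserving_piFinSuccAbove (fun _ : Fin (n+1) => ν) 0
  have hsub : (⇑e) ⁻¹' ((Set.Iic (-c)) ×ˢ (stayBelow n n c)) ⊆ stayLT (n+1) (n+1) := by
    intro x hx
    have hx1 : x 0 ≤ -c := hx.1
    have hx2 : ∀ q, 0 < q → q ≤ n → isum 0 q (fun j : Fin n => x ((0 : Fin (n+1)).succAbove j)) < c := hx.2
    have htail : (fun j : Fin n => x ((0 : Fin (n+1)).succAbove j)) = fun j : Fin n => x j.succ := by
      funext j
      congr 1
    rw [htail] at hx2
    intro q hq hqn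
    rw [isum_head x hq hqn]
    have htb : isum 0 (q - 1) (fun j : Fin n => x j.succ) < c := by
      rcases Nat.eq_zero_or_pos (q - 1) with h0 | hpos
      · rw [h0, isum_nil]
        exact hc
      · exact hx2 (q - 1) hpos (by omega)
    linarith
  have hprod : ν (Set.Iic (-c)) * μn (stayBelow n n c)
      ≤ ENNReal.ofReal (1 / Real.sqrt (n + 2)) := by
    have hms : MeasurableSet ((Set.Iic (-c : ℝ)) ×ˢ (stayBelow n n c)) :=
      measurableSet_Iic.prod (measurableSet_stayBelow n c)
    have h1 : Measure.pi (fun _ : Fin (n+1) => ν) ((⇑e) ⁻¹' ((Set.Iic (-c)) ×ˢ (stayBelow n n c)))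
        = ν (Set.Iic (-c)) * μn (stayBelow n n c) := by
      rw [hmp.measure_preimage hms.nullMeasurableSet, Measure.prod_prod]
    have h2 := measure_mono (μ := Measure.pi (fun _ : Fin (n+1) => ν)) hsub
    rw [h1] at h2
    refine le_trans h2 ?_
    have harg : ((n : ℝ) + 2) = ((n + 1 : ℕ) : ℝ) + 1 := by push_cast; ring
    rw [harg]
    exact stayLT_bound ν hsym
  calc μn (stayBelow n n c)
      = (ENNReal.ofReal (1/6))⁻¹ * (ENNReal.ofReal (1/6) * μn (stayBelow n n c)) := by
        rw [← mul_assoc, ENNReal.inv_mul_cancel (by simp) (by simp), one_mul]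
    _ ≤ (ENNReal.ofReal (1/6))⁻¹ * ENNReal.ofReal (1 / Real.sqrt (n + 2)) := by
        refine mul_le_mul_right (le_trans (mul_le_mul_left hκ _) hprod) _
    _ = ENNReal.ofReal (6 / Real.sqrt (n + 2)) := by
        rw [← ENNReal.ofReal_inv_of_pos (by norm_num : (0:ℝ) < 1/6),
          ← ENNReal.ofReal_mul (by norm_num : (0:ℝ) ≤ ((1:ℝ)/6)⁻¹)]
        congr 1
        rw [show ((1:ℝ)/6)⁻¹ = 6 by norm_num, one_div, ← div_eq_mul_inv]

end MainDiscrete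

section Gauss

open scoped NNReal ENNReal

lemma gaussianReal_symm (v : ℝ≥0) :
    (gaussianReal 0 v).map (fun y : ℝ => -y) = gaussianReal 0 v := by
  have h := gaussianReal_map_const_mul (μ := 0) (v := v) (-1)
  have h1 : (fun y : ℝ => -1 * y) = fun y : ℝ => -y := by funext y; ring
  rw [h1] at h
  rw [h]
  congr 1
  · ring
  · ext
    norm_num

lemma gaussianReal_tail {a : ℝ} (ha : 0 < a) :
    ENNReal.ofReal (1/6)
      ≤ gaussianReal 0 (Real.toNNReal (a^2)) (Set.Iic (-(2*a/Real.sqrt 6))) := by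
  set v := Real.toNNReal (a^2) with hv
  have hvr : (v : ℝ) = a^2 := Real.coe_toNNReal _ (sq_nonneg a)
  have hvne : v ≠ 0 := by
    rw [hv, ne_eq, Real.toNNReal_eq_zero, not_le]
    positivity
  set ν := gaussianReal 0 v with hνdef
  have hsym : ν.map (fun y : ℝ => -y) = ν := gaussianReal_symm v
  set lam := 2*a/Real.sqrt 6 with hlam
  have hlam0 : 0 < lam := by
    rw [hlam]
    have : (0:ℝ) < Real.sqrt 6 := Real.sqrt_pos.mpr (by norm_num)
    positivity
  -- half
  have hhalf : ENNReal.ofReal (1/2) ≤ ν (Set.Iic 0) := by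
    have hIoi : ν (Set.Ioi 0) = ν (Set.Iio 0) := by
      conv_lhs => rw [← hsym]
      rw [Measure.map_apply measurable_neg measurableSet_Ioi]
      congr 1
      ext y
      simp
    have hsplit : ν (Set.Iic 0) + ν (Set.Ioi 0) = 1 := by
      have := measure_add_measure_compl (μ := ν) (measurableSet_Iic (a := (0:ℝ)))
      rwa [Set.compl_Iic, measure_univ] at this
    have hle : ν (Set.Ioi 0) ≤ ν (Set.Iic 0) := by
      rw [hIoi]
      exact measure_mono Set.Iio_subset_Iic_self
    have h2x : (1 : ENNReal) ≤ 2 * ν (Set.Iic 0) := by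
      rw [two_mul]
      calc (1 : ENNReal) = ν (Set.Iic 0) + ν (Set.Ioi 0) := hsplit.symm
        _ ≤ ν (Set.Iic 0) + ν (Set.Iic 0) := add_le_add_right hle _
    calc ENNReal.ofReal (1/2) = (2 : ENNReal)⁻¹ := by
          rw [show (1:ℝ)/2 = (2:ℝ)⁻¹ by norm_num, ENNReal.ofReal_inv_of_pos two_pos,
            ENNReal.ofReal_ofNat]
      _ = (2 : ENNReal)⁻¹ * 1 := (mul_one _).symm
      _ ≤ (2 : ENNReal)⁻¹ * (2 * ν (Set.Iic 0)) := mul_le_mul_right h2x _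
      _ = ((2 : ENNReal)⁻¹ * 2) * ν (Set.Iic 0) := (mul_assoc _ _ _).symm
      _ = ν (Set.Iic 0) := by
          rw [ENNReal.inv_mul_cancel (by norm_num) (by norm_num), one_mul]
  -- strip
  have hstrip : ν (Set.Ioc (-lam) 0) ≤ ENNReal.ofReal (1/3) := by
    have happly := gaussianReal_apply 0 hvne (Set.Ioc (-lam) 0)
    have hbound : ∀ x : ℝ, gaussianPDF 0 v x
        ≤ ENNReal.ofReal ((Real.sqrt (2 * Real.pi * v))⁻¹) := by
      intro x
      rw [gaussianPDF_def]
      refine ENNReal.ofReal_le_ofReal ?_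
      rw [gaussianPDFReal_def]
      have hexp : Real.exp (-(x - 0)^2 / (2*(v:ℝ))) ≤ 1 := by
        rw [Real.exp_le_one_iff]
        have h1 : (0:ℝ) ≤ (x - 0)^2 := sq_nonneg _
        have h2 : (0:ℝ) < 2*(v:ℝ) := by rw [hvr]; positivity
        apply div_nonpos_of_nonpos_of_nonneg <;> nlinarith
      have hpos : (0:ℝ) ≤ (Real.sqrt (2 * Real.pi * v))⁻¹ := by positivity
      calc (Real.sqrt (2 * Real.pi * ↑v))⁻¹ * Real.exp (-(x - 0) ^ 2 / (2 * ↑v))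
          ≤ (Real.sqrt (2 * Real.pi * ↑v))⁻¹ * 1 := by
            exact mul_le_mul_of_nonneg_left hexp hpos
        _ = (Real.sqrt (2 * Real.pi * ↑v))⁻¹ := mul_one _
    have hint : ν (Set.Ioc (-lam) 0)
        ≤ ENNReal.ofReal ((Real.sqrt (2 * Real.pi * v))⁻¹) * volume (Set.Ioc (-lam) 0) := by
      rw [hνdef] at *
      rw [happly]
      calc ∫⁻ x in Set.Ioc (-lam) 0, gaussianPDF 0 v x
          ≤ ∫⁻ _x in Set.Ioc (-lam) 0, ENNReal.ofReal ((Real.sqrt (2 * Real.pi * v))⁻¹) :=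
            lintegral_mono fun x => hbound x
        _ = ENNReal.ofReal ((Real.sqrt (2 * Real.pi * v))⁻¹) * volume (Set.Ioc (-lam) 0) :=
            setLIntegral_const _ _
    have hvol : volume (Set.Ioc (-lam) 0) = ENNReal.ofReal lam := by
      rw [Real.volume_Ioc]
      congr 1
      linarith
    rw [hvol, ← ENNReal.ofReal_mul (by positivity)] at hint
    refine le_trans hint (ENNReal.ofReal_le_ofReal ?_)
    -- numeric : (√(2π a²))⁻¹ * lam ≤ 1/3
    have hsqrt2pi : Real.sqrt (2 * Real.pi * (v:ℝ)) = a * Real.sqrt (2 * Real.pi) := by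
      rw [hvr, mul_comm (2 * Real.pi) (a^2), Real.sqrt_mul (sq_nonneg a),
        Real.sqrt_sq ha.le]
    rw [hsqrt2pi, hlam]
    have hpi : (3:ℝ) ≤ Real.pi := le_of_lt Real.pi_gt_three
    have h2pi : (0:ℝ) < Real.sqrt (2 * Real.pi) := Real.sqrt_pos.mpr (by positivity)
    have h6 : (0:ℝ) < Real.sqrt 6 := Real.sqrt_pos.mpr (by norm_num)
    rw [div_eq_mul_inv (2*a) (Real.sqrt 6)]
    have key : (Real.sqrt 6 * Real.sqrt (2 * Real.pi)) ≥ 6 := by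
      rw [← Real.sqrt_mul (by norm_num : (0:ℝ) ≤ 6)]
      have h36 : (36:ℝ) ≤ 6 * (2 * Real.pi) := by nlinarith
      calc (6:ℝ) = Real.sqrt 36 := by
            rw [show (36:ℝ) = 6^2 by norm_num, Real.sqrt_sq (by norm_num)]
        _ ≤ Real.sqrt (6 * (2 * Real.pi)) := Real.sqrt_le_sqrt h36
    calc (a * Real.sqrt (2 * Real.pi))⁻¹ * (2 * a * (Real.sqrt 6)⁻¹)
        = 2 / (Real.sqrt 6 * Real.sqrt (2 * Real.pi)) := by
          field_simp
      _ ≤ 2 / 6 := by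
          apply div_le_div_of_nonneg_left (by norm_num) (by norm_num) key
      _ ≤ 1/3 := by norm_num
  -- combine
  have hunion : Set.Iic (-lam) ∪ Set.Ioc (-lam) 0 = Set.Iic 0 :=
    Set.Iic_union_Ioc_eq_Iic (by linarith)
  have hub : ν (Set.Iic 0) ≤ ν (Set.Iic (-lam)) + ν (Set.Ioc (-lam) 0) := by
    rw [← hunion]
    exact measure_union_le _ _
  have hfinal : ENNReal.ofReal (1/2) ≤ ν (Set.Iic (-lam)) + ENNReal.ofReal (1/3) :=
    le_trans hhalf (le_trans hub (add_le_add_right hstrip _))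
  have h16 : ENNReal.ofReal (1/6) = ENNReal.ofReal (1/2) - ENNReal.ofReal (1/3) := by
    rw [← ENNReal.ofReal_sub _ (by norm_num : (0:ℝ) ≤ 1/3)]
    norm_num
  rw [h16]
  exact tsub_le_iff_right.mpr hfinal

end Gauss



section Transfer

variable {Ω : Type*} [MeasurableSpace Ω]

lemma map_pi_eq (P : Measure Ω) [IsProbabilityMeasure P] {n : ℕ}
    (X : Fin n → Ω → ℝ) (hm : ∀ i, Measurable (X i))
    (h : iIndepFun X P)
    (ν : Measure ℝ) [IsProbabilityMeasure ν]
    (hν : ∀ i, P.map (X i) = ν) :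
    P.map (fun ω (i : Fin n) => X i ω) = Measure.pi (fun _ : Fin n => ν) := by
  have hVm : Measurable (fun ω (i : Fin n) => X i ω) := measurable_pi_lambda _ hm
  refine (Measure.pi_eq fun s hs => ?_).symm
  rw [Measure.map_apply hVm (MeasurableSet.univ_pi hs)]
  have hpre : (fun ω (i : Fin n) => X i ω) ⁻¹' (Set.univ.pi s) = ⋂ i, X i ⁻¹' (s i) := by
    ext ω
    simp [Set.mem_univ_pi]
  rw [hpre, h.meas_iInter (fun i => ⟨s i, hs i, rfl⟩)]
  refine Finset.prod_congr rfl fun i _ => ?_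
  rw [← hν i, Measure.map_apply (hm i) (hs i)]

end Transfer

end WedgeAux

section WedgePath

open WedgeAux

lemma wedge_coord {f g : ℝ → ℝ} (hf : Continuous f) (hg : Continuous g)
    (hf0 : f 0 = 0) (hg0 : g 0 = 0) {a r : ℝ} (ha : 1 ≤ a) (hr : 0 < r)
    (h : ∀ u ∈ Set.Ioo (0:ℝ) r, wedgeFn (f u, g u) ≠ a) :
    ∀ s ∈ Set.Ioo (0:ℝ) r, -(2*a/Real.sqrt 6) < f s := by
  intro s hs
  have hF : Continuous fun u => wedgeFn (f u, g u) := by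
    unfold wedgeFn dot2
    exact ((hf.mul continuous_const).add (hg.mul continuous_const)).max
      ((hf.mul continuous_const).add (hg.mul continuous_const))
  have hF0 : wedgeFn (f 0, g 0) = 0 := by
    simp [wedgeFn, dot2, hf0, hg0]
  have hFs : wedgeFn (f s, g s) < a := by
    by_contra hcon
    push_neg at hcon
    have hne := h s hs
    have hgt : a < wedgeFn (f s, g s) := lt_of_le_of_ne hcon (Ne.symm hne)
    have hivt := intermediate_value_Ioo (le_of_lt hs.1) hF.continuousOn
    obtain ⟨u, hu, hFu⟩ := hivt
      ⟨by rw [hF0]; linarith, hgt⟩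
    exact h u ⟨hu.1, lt_trans hu.2 hs.2⟩ hFu
  have h1 : dot2 (f s, g s) vK1 < a := lt_of_le_of_lt (le_max_left _ _) hFs
  have h2 : dot2 (f s, g s) vK2 < a := lt_of_le_of_lt (le_max_right _ _) hFs
  have h23 : Real.sqrt 2 * Real.sqrt 3 = Real.sqrt 6 := by
    rw [← Real.sqrt_mul (by norm_num : (0:ℝ) ≤ 2)]
    norm_num
  have hsum : dot2 (f s, g s) vK1 + dot2 (f s, g s) vK2 = -(Real.sqrt 6 * f s) := by
    simp only [dot2, vK1, vK2]
    linear_combination (-(f s)) * h23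
  have h6 : (0:ℝ) < Real.sqrt 6 := Real.sqrt_pos.mpr (by norm_num)
  have hlt : -(Real.sqrt 6 * f s) < 2*a := by linarith
  have h' : -(2*a) < f s * Real.sqrt 6 := by nlinarith [hlt]
  have hfin := (div_lt_iff₀ h6).mpr h'
  rwa [neg_div] at hfin

end WedgePath


/-- Let `Y = (W₁, W₂)` be a standard planar Brownian motion
started at the origin and, for `a ≥ 1`, let `κ_a` be the first time `t > 0`
with `ω(Y(t)) = a`.  There is an absolute constant `C > 0` such that for all
`a ≥ 1` and `r > 0`, `P(κ_a ≥ r) ≤ C a^{3/2}/√r`.  (The event `{κ_a ≥ r}` is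
expressed as: `ω(Y(t)) ≠ a` for all `t ∈ (0, r)`.) -/
theorem planar_bm_wedge_exit_time_tail
    (P : Measure Ω) [IsProbabilityMeasure P]
    (W1 W2 : ℝ → Ω → ℝ) (hW1 : IsStandardBM P W1) (hW2 : IsStandardBM P W2)
    (hind : IndepFun (fun ω => fun t => W1 t ω) (fun ω => fun t => W2 t ω) P) :
    ∃ C : ℝ, 0 < C ∧ ∀ a : ℝ, 1 ≤ a → ∀ r : ℝ, 0 < r →
      P {ω | ∀ t ∈ Set.Ioo (0:ℝ) r, wedgeFn (W1 t ω, W2 t ω) ≠ a}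
        ≤ ENNReal.ofReal (C * a ^ ((3:ℝ)/2) / Real.sqrt r) := by
  classical
  refine ⟨6, by norm_num, ?_⟩
  intro a ha r hr
  have ha0 : (0:ℝ) < a := lt_of_lt_of_le one_pos ha
  set lam := 2*a/Real.sqrt 6 with hlam
  have h6 : (0:ℝ) < Real.sqrt 6 := Real.sqrt_pos.mpr (by norm_num)
  have hlam0 : 0 < lam := by rw [hlam]; positivity
  set δ : ℝ := a^2 with hδ
  have hδ0 : 0 < δ := by positivity
  set N : ℕ := ⌈r/δ⌉₊ with hN
  have hN1 : 1 ≤ N := by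
    rw [hN]
    refine Nat.one_le_iff_ne_zero.mpr ?_
    rw [ne_eq, Nat.ceil_eq_zero, not_le]
    positivity
  set n : ℕ := N - 1 with hn
  have hn1 : n + 1 = N := by omega
  have hnler : r/δ ≤ (n:ℝ) + 1 := by
    have h1 : ((n+1 : ℕ):ℝ) = ((N:ℕ):ℝ) := by rw [hn1]
    push_cast at h1
    rw [h1]
    exact Nat.le_ceil _
  have hnlt : (n:ℝ) < r/δ := by
    have h1 : ((N:ℕ):ℝ) < r/δ + 1 := Nat.ceil_lt_add_one (by positivity)
    have h2 : ((n:ℕ):ℝ) = (N:ℝ) - 1 := by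
      have h3 : ((n+1:ℕ):ℝ) = (N:ℝ) := by rw [hn1]
      push_cast at h3 ⊢
      linarith
    rw [h2]
    linarith
  set tg : ℕ → ℝ := fun k => k * δ with htg
  have htg0 : tg 0 = 0 := by simp [htg]
  have htgmono : Monotone tg := by
    intro i j hij
    simp only [htg]
    exact mul_le_mul_of_nonneg_right (Nat.cast_le.mpr hij) hδ0.le
  have htgnn : ∀ k, 0 ≤ tg k := fun k => by simp only [htg]; positivity
  set ν := gaussianReal 0 (Real.toNNReal (a^2)) with hν
  have hsym : ν.map (fun y : ℝ => -y) = ν := WedgeAux.gaussianReal_symm _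
  set X : Fin n → Ω → ℝ := fun i ω => -(W1 (tg ((i:ℕ)+1)) ω - W1 (tg (i:ℕ)) ω) with hX
  have hXm : ∀ i, Measurable (X i) := fun i => ((hW1.meas _).sub (hW1.meas _)).neg
  have hXindep : iIndepFun X P := by
    have h0 := hW1.indep n tg htgmono (le_of_eq htg0.symm)
    exact h0.comp (fun _ => fun y : ℝ => -y) (fun _ => measurable_neg)
  have hXlaw : ∀ i : Fin n, P.map (X i) = ν := by
    intro i
    have hincrm : Measurable (fun ω => W1 (tg ((i:ℕ)+1)) ω - W1 (tg (i:ℕ)) ω) :=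
      (hW1.meas _).sub (hW1.meas _)
    have hg := hW1.gauss (tg (i:ℕ)) (tg ((i:ℕ)+1)) (htgnn _) (htgmono (by omega))
    have harg : tg ((i:ℕ)+1) - tg (i:ℕ) = a^2 := by
      simp only [htg]
      push_cast
      ring
    rw [harg] at hg
    have hmm : P.map (X i) = (P.map (fun ω => W1 (tg ((i:ℕ)+1)) ω - W1 (tg (i:ℕ)) ω)).map
        (fun y : ℝ => -y) := by
      rw [Measure.map_map measurable_neg hincrm]
      rfl
    rw [hmm, hg, hν]
    exact WedgeAux.gaussianReal_symm _
  set V : Ω → (Fin n → ℝ) := fun ω i => X i ω with hV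
  have hVm : Measurable V := measurable_pi_lambda _ hXm
  have hlaw : P.map V = Measure.pi (fun _ : Fin n => ν) :=
    WedgeAux.map_pi_eq P X hXm hXindep ν hXlaw
  have hsub : {ω | ∀ u ∈ Set.Ioo (0:ℝ) r, wedgeFn (W1 u ω, W2 u ω) ≠ a}
      ⊆ V ⁻¹' (WedgeAux.stayBelow n n lam) := by
    intro ω hω
    have hcoord := wedge_coord (hW1.cont ω) (hW2.cont ω) (hW1.start ω) (hW2.start ω)
      ha hr hω
    intro q hq hqn
    have hsumq : WedgeAux.isum 0 q (V ω) = -(W1 (tg q) ω) := by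
      have e1 : WedgeAux.isum 0 q (V ω)
          = ∑ k ∈ Finset.range q, -(W1 (tg (k+1)) ω - W1 (tg k) ω) := by
        unfold WedgeAux.isum
        refine Finset.sum_bij' (fun m _ => (m : ℕ))
          (fun k hk => (⟨k, by simp only [Finset.mem_range] at hk; omega⟩ : Fin n))
          ?_ ?_ ?_ ?_ ?_
        · intro m hm
          simp only [Finset.mem_filter, Finset.mem_univ, true_and] at hm
          simp only [Finset.mem_range]
          omega
        · intro k hk
          simp only [Finset.mem_range] at hk
          simp only [Finset.mem_filter, Finset.mem_univ, true_and, Fin.val_mk]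
          omega
        · intro m hm
          exact Fin.ext (by simp only [Fin.val_mk])
        · intro k hk
          simp only [Fin.val_mk]
        · intro m hm
          rfl
      rw [e1, Finset.sum_neg_distrib, Finset.sum_range_sub (f := fun k => W1 (tg k) ω)]
      have hstart : W1 (tg 0) ω = 0 := by rw [htg0]; exact hW1.start ω
      simp only [hstart]
      ring
    have htq : tg q ∈ Set.Ioo (0:ℝ) r := by
      constructor
      · simp only [htg]
        have hq' : (0:ℝ) < (q:ℝ) := by exact_mod_cast hq
        positivity
      · simp only [htg]
        have hq' : (q:ℝ) ≤ (n:ℝ) := Nat.cast_le.mpr hqn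
        calc (q:ℝ) * δ ≤ (n:ℝ) * δ := mul_le_mul_of_nonneg_right hq' hδ0.le
          _ < (r/δ) * δ := mul_lt_mul_of_pos_right hnlt hδ0
          _ = r := div_mul_cancel₀ r hδ0.ne'
    have hc := hcoord (tg q) htq
    rw [hsumq]
    rw [hlam]
    linarith
  calc P {ω | ∀ u ∈ Set.Ioo (0:ℝ) r, wedgeFn (W1 u ω, W2 u ω) ≠ a}
      ≤ P (V ⁻¹' (WedgeAux.stayBelow n n lam)) := measure_mono hsub
    _ = (P.map V) (WedgeAux.stayBelow n n lam) :=
        (Measure.map_apply hVm (WedgeAux.measurableSet_stayBelow n lam)).symm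
    _ = Measure.pi (fun _ : Fin n => ν) (WedgeAux.stayBelow n n lam) := by rw [hlaw]
    _ ≤ ENNReal.ofReal (6 / Real.sqrt (n + 2)) :=
        WedgeAux.stayBelow_bound ν hsym hlam0 (WedgeAux.gaussianReal_tail ha0)
    _ ≤ ENNReal.ofReal (6 * a ^ ((3:ℝ)/2) / Real.sqrt r) := by
        refine ENNReal.ofReal_le_ofReal ?_
        have hrle : r ≤ a^3 * ((n:ℝ)+2) := by
          have h1 : r / δ ≤ (n:ℝ) + 2 := by linarith [hnler]
          rw [div_le_iff₀ hδ0] at h1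
          have h2 : a^2 ≤ a^3 := by nlinarith
          have h3 : (0:ℝ) ≤ (n:ℝ) + 2 := by positivity
          calc r ≤ ((n:ℝ)+2) * δ := h1
            _ = a^2 * ((n:ℝ)+2) := by rw [hδ]; ring
            _ ≤ a^3 * ((n:ℝ)+2) := mul_le_mul_of_nonneg_right h2 h3
        have hpow : a ^ ((3:ℝ)/2) = Real.sqrt (a^3) := by
          rw [Real.sqrt_eq_rpow, ← Real.rpow_natCast a 3, ← Real.rpow_mul ha0.le]
          norm_num
        have hs2 : Real.sqrt r ≤ a ^ ((3:ℝ)/2) * Real.sqrt ((n:ℝ)+2) := by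
          rw [hpow, ← Real.sqrt_mul (by positivity)]
          exact Real.sqrt_le_sqrt hrle
        have hsn : (0:ℝ) < Real.sqrt ((n:ℝ)+2) := Real.sqrt_pos.mpr (by positivity)
        have hsr : (0:ℝ) < Real.sqrt r := Real.sqrt_pos.mpr hr
        rw [div_le_div_iff₀ hsn hsr]
        calc 6 * Real.sqrt r ≤ 6 * (a ^ ((3:ℝ)/2) * Real.sqrt ((n:ℝ)+2)) := by nlinarith [hs2]
          _ = 6 * a ^ ((3:ℝ)/2) * Real.sqrt ((n:ℝ)+2) := by ring

end
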